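/- arXiv:1703.05879 — 4 statements merged into one kernel-verified Lean document; each statement's English description precedes it below -/
import Mathlib

section
/- Let 𝔤 be a finite-dimensional Lie algebra over a field k and θ a diagonalizable Lie algebra automorphism of 𝔤, i.e. 𝔤 = ⊕_{μ∈Δ} 𝔤_μ where Δ ⊆ k is the set of eigenvalues of θ and 𝔤_μ = ker(θ − μ·id). Then the Lie subalgebra 𝐠 of 𝔤 generated by the eigenspaces 𝔤_μ with μ ≠ 1 is an ideal of 𝔤. -/
/-- Let `𝔤` be a finite-dimensional Lie algebra over a field `k` and `θ` a
diagonalizable Lie algebra automorphism of `𝔤` (i.e. `𝔤` is the direct sum of the eigenspaces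
`𝔤_μ = ker (θ - μ • id)`).  Then the Lie subalgebra of `𝔤` generated by the eigenspaces `𝔤_μ`
with `μ ≠ 1` is an ideal of `𝔤`: it is closed under bracketing with arbitrary elements. -/
theorem lieSpan_ne_one_eigenspaces_isIdeal
    {k 𝔤 : Type*} [Field k] [LieRing 𝔤] [LieAlgebra k 𝔤] [FiniteDimensional k 𝔤]
    (θ : Module.End k 𝔤) (hbij : Function.Bijective θ)
    (hbr : ∀ x y : 𝔤, θ ⁅x, y⁆ = ⁅θ x, θ y⁆)
    (hdiag : ⨆ μ : k, θ.eigenspace μ = ⊤) :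
    ∀ x y : 𝔤,
      y ∈ LieSubalgebra.lieSpan k 𝔤 (⋃ μ ∈ {μ : k | μ ≠ 1}, (θ.eigenspace μ : Set 𝔤)) →
      ⁅x, y⁆ ∈ LieSubalgebra.lieSpan k 𝔤 (⋃ μ ∈ {μ : k | μ ≠ 1}, (θ.eigenspace μ : Set 𝔤)) := by
  set s : Set 𝔤 := ⋃ μ ∈ {μ : k | μ ≠ 1}, (θ.eigenspace μ : Set 𝔤) with hs
  set S := LieSubalgebra.lieSpan k 𝔤 s with hS
  -- Step 1: fixed vectors of θ bracket S into S
  have key : ∀ x : 𝔤, θ x = x → ∀ y ∈ S, ⁅x, y⁆ ∈ S := by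
    intro x hx y hy
    have : y ∈ S ∧ ⁅x, y⁆ ∈ S := by
      refine LieSubalgebra.lieSpan_induction (p := fun z _ => z ∈ S ∧ ⁅x, z⁆ ∈ S) k ?_ ?_ ?_ ?_ ?_ hy
      · intro z hz
        refine ⟨LieSubalgebra.subset_lieSpan hz, ?_⟩
        simp only [hs, Set.mem_iUnion, Set.mem_setOf_eq, SetLike.mem_coe] at hz
        obtain ⟨μ, hμ, hzμ⟩ := hz
        rw [Module.End.mem_eigenspace_iff] at hzμ
        apply LieSubalgebra.subset_lieSpan
        simp only [hs, Set.mem_iUnion, Set.mem_setOf_eq, SetLike.mem_coe]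
        refine ⟨μ, hμ, ?_⟩
        rw [Module.End.mem_eigenspace_iff, hbr, hx, hzμ, lie_smul]
      · simp [S.zero_mem]
      swap
      · rintro r z _ ⟨h1, h2⟩
        exact ⟨S.smul_mem r h1, by rw [lie_smul]; exact S.smul_mem r h2⟩
      · rintro a b _ _ ⟨ha1, ha2⟩ ⟨hb1, hb2⟩
        exact ⟨S.add_mem ha1 hb1, by rw [lie_add]; exact S.add_mem ha2 hb2⟩
      · rintro a b _ _ ⟨ha1, ha2⟩ ⟨hb1, hb2⟩
        refine ⟨S.lie_mem ha1 hb1, ?_⟩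
        rw [leibniz_lie]
        exact S.add_mem (S.lie_mem ha2 hb1) (S.lie_mem ha1 hb2)
    exact this.2
  intro x y hy
  -- The set of x bracketing S into S is a submodule containing every eigenspace
  set T : Submodule k 𝔤 :=
    { carrier := {x : 𝔤 | ∀ y ∈ S, ⁅x, y⁆ ∈ S}
      add_mem' := fun {a b} ha hb y hy => by
        rw [add_lie]; exact S.add_mem (ha y hy) (hb y hy)
      zero_mem' := fun y hy => by rw [zero_lie]; exact S.zero_mem
      smul_mem' := fun r a ha y hy => by rw [smul_lie]; exact S.smul_mem r (ha y hy) }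
  have hT : ∀ μ : k, θ.eigenspace μ ≤ T := by
    intro μ z hz
    by_cases hμ : μ = 1
    · intro w hw
      apply key z _ w hw
      rw [Module.End.mem_eigenspace_iff] at hz
      rw [hz, hμ, one_smul]
    · intro w hw
      refine S.lie_mem ?_ hw
      apply LieSubalgebra.subset_lieSpan
      simp only [hs, Set.mem_iUnion, Set.mem_setOf_eq, SetLike.mem_coe]
      exact ⟨μ, hμ, hz⟩
  have : (⊤ : Submodule k 𝔤) ≤ T := by
    rw [← hdiag]; exact iSup_le hT
  exact this (Submodule.mem_top) y hy
end

section
/- Let 𝔤 be a finite-dimensional Lie algebra over a field k and θ a diagonalizable Lie algebra automorphism of 𝔤, with set of eigenvalues Δ ⊆ k and eigenspaces 𝔤_μ = ker(θ − μ·id), so 𝔤 = ⊕_{μ∈Δ} 𝔤_μ. Suppose S ⊆ Δ has the property that for every μ ∈ S and every ν ∈ Δ \ S, if μν ∈ Δ then μν ∈ S. Then the Lie subalgebra 𝐠' of 𝔤 generated by ⊕_{μ∈S} 𝔤_μ is an ideal of 𝔤. -/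
/-- Let `𝔤` be a finite-dimensional Lie algebra over a field `k` and `θ` a
diagonalizable Lie algebra automorphism of `𝔤` with eigenvalue set `Δ` and eigenspaces
`𝔤_μ = ker (θ - μ • id)`.  Suppose `S ⊆ Δ` satisfies: for every `μ ∈ S` and every
`ν ∈ Δ \ S`, if `μν ∈ Δ` then `μν ∈ S`.  Then the Lie subalgebra of `𝔤` generated by
`⊕_{μ ∈ S} 𝔤_μ` is an ideal of `𝔤` (closed under bracketing with arbitrary elements). -/
theorem lieSpan_closedEigenvalueSet_isIdeal
    {k 𝔤 : Type*} [Field k] [LieRing 𝔤] [LieAlgebra k 𝔤] [FiniteDimensional k 𝔤]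
    (θ : Module.End k 𝔤) (hbij : Function.Bijective θ)
    (hbr : ∀ x y : 𝔤, θ ⁅x, y⁆ = ⁅θ x, θ y⁆)
    (hdiag : ⨆ μ : k, θ.eigenspace μ = ⊤)
    (S : Set k) (hS : ∀ μ ∈ S, θ.HasEigenvalue μ)
    (hclosed : ∀ μ ∈ S, ∀ ν : k, θ.HasEigenvalue ν → ν ∉ S →
      θ.HasEigenvalue (μ * ν) → μ * ν ∈ S) :
    ∀ x y : 𝔤,
      y ∈ LieSubalgebra.lieSpan k 𝔤 (⋃ μ ∈ S, (θ.eigenspace μ : Set 𝔤)) →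
      ⁅x, y⁆ ∈ LieSubalgebra.lieSpan k 𝔤 (⋃ μ ∈ S, (θ.eigenspace μ : Set 𝔤)) := by
  set gens : Set 𝔤 := ⋃ μ ∈ S, (θ.eigenspace μ : Set 𝔤) with hgens
  set L : LieSubalgebra k 𝔤 := LieSubalgebra.lieSpan k 𝔤 gens with hL
  -- the subalgebra of elements of `L` that bracket into `L` with everything
  let I : LieSubalgebra k 𝔤 :=
    { carrier := {y | y ∈ L ∧ ∀ x : 𝔤, ⁅x, y⁆ ∈ L}
      zero_mem' := ⟨L.zero_mem, fun x => by simp [L.zero_mem]⟩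
      add_mem' := fun {a b} ha hb =>
        ⟨L.add_mem ha.1 hb.1, fun x => by
          rw [lie_add]; exact L.add_mem (ha.2 x) (hb.2 x)⟩
      smul_mem' := fun c {a} ha =>
        ⟨L.smul_mem c ha.1, fun x => by
          rw [lie_smul]; exact L.smul_mem c (ha.2 x)⟩
      lie_mem' := fun {a b} ha hb =>
        ⟨L.lie_mem ha.1 hb.1, fun x => by
          rw [leibniz_lie]
          refine L.add_mem (hb.2 ⁅x, a⁆) ?_
          rw [← lie_skew]
          exact L.neg_mem (ha.2 ⁅x, b⁆)⟩ }
  -- generators are in `I`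
  have hsub : gens ⊆ I := by
    rintro y hy
    simp only [hgens, Set.mem_iUnion] at hy
    obtain ⟨μ, hμ, hyμ⟩ := hy
    have hyL : y ∈ L := LieSubalgebra.subset_lieSpan (by
      simp only [hgens, Set.mem_iUnion]; exact ⟨μ, hμ, hyμ⟩)
    refine ⟨hyL, fun x => ?_⟩
    -- decompose `x` over eigenspaces
    have hx : x ∈ ⨆ ν : k, θ.eigenspace ν := hdiag ▸ Submodule.mem_top
    refine Submodule.iSup_induction _ (motive := fun x => ⁅x, y⁆ ∈ L) hx ?_ (by simp [L.zero_mem])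
      (fun a b ha hb => by show ⁅a + b, y⁆ ∈ L; rw [add_lie]; exact L.add_mem ha hb)
    intro ν x hx
    by_cases hx0 : x = 0
    · simp [hx0, L.zero_mem]
    by_cases hb0 : ⁅x, y⁆ = 0
    · simp [hb0, L.zero_mem]
    -- `⁅x, y⁆` is an eigenvector with eigenvalue `ν * μ`
    have hθx : θ x = ν • x := (Module.End.mem_eigenspace_iff).1 hx
    have hθy : θ y = μ • y := (Module.End.mem_eigenspace_iff).1 hyμ
    have hmem : ⁅x, y⁆ ∈ θ.eigenspace (μ * ν) := by
      rw [Module.End.mem_eigenspace_iff, hbr, hθx, hθy, smul_lie, lie_smul, smul_smul,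
        mul_comm ν μ]
    by_cases hν : ν ∈ S
    · exact L.lie_mem (LieSubalgebra.subset_lieSpan (by
        simp only [hgens, Set.mem_iUnion]; exact ⟨ν, hν, hx⟩)) hyL
    · have hνe : θ.HasEigenvalue ν := Module.End.hasEigenvalue_of_hasEigenvector ⟨hx, hx0⟩
      have hμνe : θ.HasEigenvalue (μ * ν) := Module.End.hasEigenvalue_of_hasEigenvector ⟨hmem, hb0⟩
      have hμν : μ * ν ∈ S := hclosed μ hμ ν hνe hν hμνe
      exact LieSubalgebra.subset_lieSpan (by
        simp only [hgens, Set.mem_iUnion]; exact ⟨μ * ν, hμν, hmem⟩)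
  intro x y hy
  exact ((LieSubalgebra.lieSpan_le.2 hsub) hy).2 x
end

section
/- Let V be a finite-dimensional complex normed vector space of dimension d and A an invertible linear endomorphism of V. Let ε ≥ 0 and suppose every eigenvalue λ of A satisfies (1+ε)^{-1} ≤ |λ| ≤ 1+ε. Then there exists a constant C > 0 such that for all n ∈ ℤ, the operator norm satisfies ‖Aⁿ‖ ≤ C·(1+ε)^{|n|}·(1+|n|)^{d}. In particular, if every eigenvalue of A has modulus exactly 1 (ε = 0), then ‖Aⁿ‖ ≤ C(1+|n|)^{d} for all n ∈ ℤ. -/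
open Module Finset

/-- Auxiliary: polynomial-growth bound for powers of an operator whose eigenvalues all
have modulus at most `r ≥ 1`. -/
lemma aux_opNorm_pow_le
    {V : Type*} [NormedAddCommGroup V] [NormedSpace ℂ V] [FiniteDimensional ℂ V]
    (d : ℕ) (hd : Module.finrank ℂ V = d)
    (f : V →L[ℂ] V) (r : ℝ) (hr : 1 ≤ r)
    (hspec : ∀ μ : ℂ, Module.End.HasEigenvalue (f : V →ₗ[ℂ] V) μ → ‖μ‖ ≤ r) :
    ∃ C : ℝ, 0 < C ∧ ∀ n : ℕ,
      ‖((f ^ n : V →L[ℂ] V))‖ ≤ C * r ^ n * (1 + (n : ℝ)) ^ d := by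
  have hr0 : (0:ℝ) ≤ r := le_trans zero_le_one hr
  rcases subsingleton_or_nontrivial V with hV | hV
  · refine ⟨1, one_pos, fun n => ?_⟩
    have : (f ^ n : V →L[ℂ] V) = 0 := Subsingleton.elim _ _
    rw [this, norm_zero, one_mul]
    positivity
  · set F : Module.End ℂ V := (f : V →ₗ[ℂ] V) with hF
    have htop : ⨆ μ : ℂ, F.maxGenEigenspace μ = ⊤ :=
      Module.End.iSup_maxGenEigenspace_eq_top F
    set s : Set V := ⋃ μ : ℂ, (F.maxGenEigenspace μ : Set V) with hs
    have hspan : Submodule.span ℂ s = ⊤ := by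
      rw [hs, Submodule.span_iUnion]
      simp only [Submodule.span_eq]
      exact htop
    obtain ⟨b, hbs, hbspan, hli⟩ := exists_linearIndependent ℂ s
    have hble : ⊤ ≤ Submodule.span ℂ (Set.range ((↑) : b → V)) := by
      rw [Subtype.range_coe, hbspan, hspan]
    let B : Basis b ℂ V := Basis.mk hli hble
    haveI : Finite b := hli.finite
    haveI : Fintype b := Fintype.ofFinite _
    -- choose an eigenvalue for each basis vector
    have hmem : ∀ i : b, ∃ μ : ℂ, (i : V) ∈ F.maxGenEigenspace μ := by
      intro i
      have := hbs i.2
      simpa [hs, Set.mem_iUnion] using this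
    choose μ hμ using hmem
    -- each μ i is an eigenvalue
    have heig : ∀ i : b, ‖μ i‖ ≤ r := by
      intro i
      apply hspec
      have hne : (i : V) ≠ 0 := by
        have := B.ne_zero i
        simpa [B, Basis.mk_apply] using this
      have h1 : (i : V) ∈ F.genEigenspace (μ i) (finrank ℂ V) := by
        rw [← Module.End.maxGenEigenspace_eq_genEigenspace_finrank]
        exact hμ i
      have h2 : F.HasGenEigenvalue (μ i) (finrank ℂ V) := by
        intro h
        rw [h] at h1
        exact hne h1
      exact Module.End.hasEigenvalue_of_hasGenEigenvalue h2
    -- nilpotency bound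
    set y : b → ℕ → V := fun i k => ((F - μ i • 1) ^ k) (i : V) with hy
    have hnil : ∀ i : b, ∀ k : ℕ, d ≤ k → y i k = 0 := by
      intro i k hk
      have h1 : (i : V) ∈ F.genEigenspace (μ i) (finrank ℂ V) := by
        rw [← Module.End.maxGenEigenspace_eq_genEigenspace_finrank]
        exact hμ i
      have h2 : ((F - μ i • 1) ^ d) (i : V) = 0 := by
        rw [← hd]
        exact (Module.End.mem_genEigenspace_nat.mp h1 : _)
      have hkd : k = (k - d) + d := by omega
      rw [hy]; simp only
      rw [hkd, pow_add, Module.End.mul_apply, h2, map_zero]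
    -- binomial expansion bound for basis vectors
    have hbv : ∀ i : b, ∀ n : ℕ, ‖(F ^ n) (i : V)‖ ≤
        ∑ k ∈ range (n + 1), (n.choose k : ℝ) * ‖μ i‖ ^ (n - k) * ‖y i k‖ := by
      intro i n
      have hcomm : Commute (F - μ i • 1) ((μ i) • (1 : Module.End ℂ V)) :=
        (Commute.one_right (F - μ i • 1)).smul_right (μ i)
      have hFe : F = (F - μ i • 1) + (μ i) • 1 := by abel
      have hexp : (F ^ n) (i : V) = ∑ k ∈ range (n + 1),
          ((n.choose k : ℂ) * (μ i) ^ (n - k)) • y i k := by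
        conv_lhs => rw [hFe]
        rw [hcomm.add_pow]
        rw [LinearMap.sum_apply]
        refine Finset.sum_congr rfl fun k hk => ?_
        have : (μ i • (1 : Module.End ℂ V)) ^ (n - k) = (μ i) ^ (n - k) • 1 := by
          rw [smul_pow, one_pow]
        rw [this]
        simp only [Module.End.mul_apply, LinearMap.smul_apply, Module.End.one_apply,
          Module.End.natCast_apply, LinearMap.map_smul]
        rw [hy]; simp only
        rw [map_nsmul, mul_smul, smul_comm ((n.choose k : ℂ)) _, Nat.cast_smul_eq_nsmul]
      rw [hexp]
      refine (norm_sum_le _ _).trans (Finset.sum_le_sum fun k hk => ?_)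
      exact le_of_eq (by rw [norm_smul, norm_mul, norm_pow]; simp)
    -- uniform bound for basis vectors
    set K : ↑b → ℝ := fun i => ∑ k ∈ range d, ‖y i k‖ with hK
    have hK0 : ∀ i, 0 ≤ K i := fun i => Finset.sum_nonneg fun k _ => norm_nonneg _
    have hbv2 : ∀ i : ↑b, ∀ n : ℕ, ‖(F ^ n) (i : V)‖ ≤
        (1 + (n : ℝ)) ^ d * r ^ n * K i := by
      intro i n
      refine (hbv i n).trans ?_
      have step : ∀ k ∈ range (n + 1),
          (n.choose k : ℝ) * ‖μ i‖ ^ (n - k) * ‖y i k‖ ≤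
          (if k ∈ range d then (1 + (n : ℝ)) ^ d * r ^ n * ‖y i k‖ else 0) := by
        intro k hk
        by_cases hkd : k ∈ range d
        · rw [if_pos hkd]
          have h1 : (n.choose k : ℝ) ≤ (1 + (n : ℝ)) ^ d := by
            calc (n.choose k : ℝ) ≤ (n : ℝ) ^ k := by
                  exact_mod_cast Nat.choose_le_pow n k
            _ ≤ (1 + (n : ℝ)) ^ k :=
                  pow_le_pow_left₀ (Nat.cast_nonneg n) (by linarith) k
            _ ≤ (1 + (n : ℝ)) ^ d := by
                  apply pow_le_pow_right₀ (by linarith [Nat.cast_nonneg (α := ℝ) n])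
                  exact le_of_lt (Finset.mem_range.mp hkd)
          have h2 : ‖μ i‖ ^ (n - k) ≤ r ^ n := by
            calc ‖μ i‖ ^ (n - k) ≤ r ^ (n - k) := pow_le_pow_left₀ (norm_nonneg _) (heig i) _
            _ ≤ r ^ n := pow_le_pow_right₀ hr (Nat.sub_le n k)
          have := mul_le_mul (mul_le_mul h1 h2 (by positivity) (by positivity))
            (le_refl ‖y i k‖) (norm_nonneg _) (by positivity)
          exact this
        · rw [if_neg hkd]
          have hy0 : y i k = 0 := hnil i k (by simpa using Finset.mem_range.not.mp hkd)
          rw [hy0, norm_zero, mul_zero]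
      refine (Finset.sum_le_sum step).trans ?_
      rw [Finset.sum_ite_mem]
      calc ∑ k ∈ range (n+1) ∩ range d, (1 + (n : ℝ)) ^ d * r ^ n * ‖y i k‖
          ≤ ∑ k ∈ range d, (1 + (n : ℝ)) ^ d * r ^ n * ‖y i k‖ := by
            apply Finset.sum_le_sum_of_subset_of_nonneg (Finset.inter_subset_right)
            intro k _ _; positivity
      _ = (1 + (n : ℝ)) ^ d * r ^ n * K i := by rw [hK, Finset.mul_sum]
    -- coordinate functionals
    set c : ↑b → (V →L[ℂ] ℂ) := fun i => LinearMap.toContinuousLinearMap (B.coord i) with hc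
    set C0 : ℝ := ∑ i : ↑b, ‖c i‖ * K i with hC0
    have hC00 : 0 ≤ C0 := Finset.sum_nonneg fun i _ =>
      mul_nonneg (norm_nonneg _) (hK0 i)
    refine ⟨C0 + 1, by linarith, fun n => ?_⟩
    have hRHS : 0 ≤ (C0 + 1) * r ^ n * (1 + (n : ℝ)) ^ d := by positivity
    apply ContinuousLinearMap.opNorm_le_bound _ hRHS
    intro x
    have hfx : (f ^ n : V →L[ℂ] V) x = (F ^ n) x := by
      rw [hF, ← ContinuousLinearMap.toLinearMap_pow]
      rfl
    rw [hfx]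
    have hxrep : (F ^ n) x = ∑ i : ↑b, (B.repr x i) • (F ^ n) (i : V) := by
      conv_lhs => rw [← B.sum_repr x]
      rw [map_sum]
      refine Finset.sum_congr rfl fun i _ => ?_
      rw [LinearMap.map_smul]
      congr 2
      exact Basis.mk_apply hli hble i
    rw [hxrep]
    refine (norm_sum_le _ _).trans ?_
    have hterm : ∀ i : ↑b, ‖(B.repr x i) • (F ^ n) (i : V)‖ ≤
        (‖c i‖ * K i) * ((1 + (n : ℝ)) ^ d * r ^ n) * ‖x‖ := by
      intro i
      rw [norm_smul]
      have h1 : ‖B.repr x i‖ ≤ ‖c i‖ * ‖x‖ := by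
        have : B.repr x i = c i x := rfl
        rw [this]
        exact (c i).le_opNorm x
      have := mul_le_mul h1 (hbv2 i n) (norm_nonneg _)
        (by positivity)
      calc ‖B.repr x i‖ * ‖(F ^ n) (i : V)‖ ≤
          (‖c i‖ * ‖x‖) * ((1 + (n : ℝ)) ^ d * r ^ n * K i) := this
      _ = (‖c i‖ * K i) * ((1 + (n : ℝ)) ^ d * r ^ n) * ‖x‖ := by ring
    refine (Finset.sum_le_sum fun i _ => hterm i).trans ?_
    have : ∑ i : ↑b, (‖c i‖ * K i) * ((1 + (n : ℝ)) ^ d * r ^ n) * ‖x‖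
        = C0 * ((1 + (n : ℝ)) ^ d * r ^ n) * ‖x‖ := by
      rw [hC0, Finset.sum_mul, Finset.sum_mul]
    rw [this]
    have : C0 * ((1 + (n : ℝ)) ^ d * r ^ n) ≤ (C0 + 1) * r ^ n * (1 + (n : ℝ)) ^ d := by
      have h1 : C0 ≤ C0 + 1 := by linarith
      calc C0 * ((1 + (n : ℝ)) ^ d * r ^ n) = C0 * (1 + (n : ℝ)) ^ d * r ^ n := by ring
      _ ≤ (C0 + 1) * (1 + (n : ℝ)) ^ d * r ^ n := by gcongr
      _ = (C0 + 1) * r ^ n * (1 + (n : ℝ)) ^ d := by ring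
    exact mul_le_mul_of_nonneg_right this (norm_nonneg x) |>.trans_eq rfl


/-- Let `V` be a finite-dimensional complex normed vector space of dimension
`d` and `A` an invertible (continuous) linear endomorphism of `V`.  Let `ε ≥ 0` and suppose
every eigenvalue `μ` of `A` satisfies `(1+ε)⁻¹ ≤ |μ| ≤ 1+ε`.  Then there is a constant
`C > 0` such that for all `n : ℤ` the operator norm satisfies
`‖Aⁿ‖ ≤ C * (1+ε)^{|n|} * (1+|n|)^d`. -/
theorem opNorm_zpow_le_of_unimodular_spectrum
    {V : Type*} [NormedAddCommGroup V] [NormedSpace ℂ V] [FiniteDimensional ℂ V]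
    (d : ℕ) (hd : Module.finrank ℂ V = d)
    (A : V ≃L[ℂ] V) (ε : ℝ) (hε : 0 ≤ ε)
    (hspec : ∀ μ : ℂ, Module.End.HasEigenvalue
        ((A : V →L[ℂ] V) : V →ₗ[ℂ] V) μ → (1 + ε)⁻¹ ≤ ‖μ‖ ∧ ‖μ‖ ≤ 1 + ε) :
    ∃ C : ℝ, 0 < C ∧ ∀ n : ℤ,
      ‖((A ^ n : V ≃L[ℂ] V) : V →L[ℂ] V)‖ ≤ C * (1 + ε) ^ |n| * (1 + (|n| : ℝ)) ^ d := by
  set r : ℝ := 1 + ε with hrdef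
  have hr : 1 ≤ r := by simp [hrdef]; linarith
  have hr0 : (0:ℝ) < r := by linarith
  -- coercion of powers of equivalences
  have hcoe : ∀ (E : V ≃L[ℂ] V) (m : ℕ),
      ((E ^ m : V ≃L[ℂ] V) : V →L[ℂ] V) = ((E : V →L[ℂ] V)) ^ m := by
    intro E m
    induction m with
    | zero => ext x; rw [pow_zero, pow_zero]; rfl
    | succ m ih =>
      ext x
      rw [pow_succ, pow_succ, ContinuousLinearMap.mul_apply, ← ih]
      rfl
  -- positive powers
  obtain ⟨C₁, hC₁, hbound₁⟩ := aux_opNorm_pow_le d hd (A : V →L[ℂ] V) r hr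
    (fun μ hμ => (hspec μ hμ).2)
  -- eigenvalue transfer for the inverse
  have hspec' : ∀ μ : ℂ, Module.End.HasEigenvalue
      (((A⁻¹ : V ≃L[ℂ] V) : V →L[ℂ] V) : V →ₗ[ℂ] V) μ → ‖μ‖ ≤ r := by
    intro μ hμ
    obtain ⟨v, hv⟩ := hμ.exists_hasEigenvector
    have happ : (A⁻¹ : V ≃L[ℂ] V) v = μ • v := hv.apply_eq_smul
    have hsymm : A.symm v = μ • v := happ
    have hμ0 : μ ≠ 0 := by
      intro h
      rw [h, zero_smul] at hsymm
      have : v = 0 := by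
        have := congrArg A hsymm
        rwa [A.apply_symm_apply, map_zero] at this
      exact hv.2 this
    have hAv : A v = μ⁻¹ • v := by
      have h1 : v = μ • A v := by
        have := congrArg A hsymm
        rwa [A.apply_symm_apply, map_smul] at this
      have := congrArg (fun w => μ⁻¹ • w) h1
      simpa [smul_smul, inv_mul_cancel₀ hμ0] using this.symm
    have heig : Module.End.HasEigenvalue
        (((A : V →L[ℂ] V)) : V →ₗ[ℂ] V) μ⁻¹ :=
      Module.End.hasEigenvalue_of_hasEigenvector
        ⟨Module.End.mem_eigenspace_iff.mpr hAv, hv.2⟩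
    have hle := (hspec μ⁻¹ heig).1
    rw [norm_inv] at hle
    have hμn : (0:ℝ) < ‖μ‖ := norm_pos_iff.mpr hμ0
    have h2 := mul_le_mul_of_nonneg_left hle (le_of_lt (mul_pos hr0 hμn))
    have e1 : r * ‖μ‖ * r⁻¹ = ‖μ‖ := by field_simp
    have e2 : r * ‖μ‖ * ‖μ‖⁻¹ = r := by rw [mul_assoc, mul_inv_cancel₀ (ne_of_gt hμn), mul_one]
    rw [e1, e2] at h2
    exact h2
  obtain ⟨C₂, hC₂, hbound₂⟩ := aux_opNorm_pow_le d hd ((A⁻¹ : V ≃L[ℂ] V) : V →L[ℂ] V) r hr hspec'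
  refine ⟨C₁ + C₂, by linarith, fun n => ?_⟩
  have habs : ((1:ℝ) + ε) ^ |n| = r ^ n.natAbs := by
    rw [← zpow_natCast, Int.abs_eq_natAbs]
  have habs2 : |(n : ℝ)| = (n.natAbs : ℝ) := by
    rw [← Int.cast_abs, Int.abs_eq_natAbs, Int.cast_natCast]
  rw [habs, habs2]
  rcases n with m | m
  · -- nonnegative
    have h1 : (A ^ (Int.ofNat m) : V ≃L[ℂ] V) = A ^ m := zpow_natCast A m
    have h2 : (Int.ofNat m).natAbs = m := rfl
    rw [h1, h2, hcoe]
    calc ‖((A : V →L[ℂ] V)) ^ m‖ ≤ C₁ * r ^ m * (1 + (m:ℝ)) ^ d := hbound₁ m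
    _ ≤ (C₁ + C₂) * r ^ m * (1 + (m:ℝ)) ^ d := by
        have : C₁ ≤ C₁ + C₂ := by linarith
        gcongr
  · -- negative
    have h1 : (A ^ (Int.negSucc m) : V ≃L[ℂ] V) = (A⁻¹ : V ≃L[ℂ] V) ^ (m + 1) := by
      rw [zpow_negSucc, ← inv_pow]
    have h2 : (Int.negSucc m).natAbs = m + 1 := rfl
    rw [h1, h2, hcoe]
    calc ‖(((A⁻¹ : V ≃L[ℂ] V)) : V →L[ℂ] V) ^ (m+1)‖
        ≤ C₂ * r ^ (m+1) * (1 + ((m+1:ℕ):ℝ)) ^ d := hbound₂ (m+1)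
    _ ≤ (C₁ + C₂) * r ^ (m+1) * (1 + ((m+1:ℕ):ℝ)) ^ d := by
        have : C₂ ≤ C₁ + C₂ := by linarith
        gcongr
end

section
/- Let H be a complex Hilbert space, U : H → H a unitary operator, m ≥ 1 an integer, and A an invertible m×m complex matrix whose powers grow at most polynomially: there exist C > 0 and q ∈ ℕ with ‖Aⁿ‖ ≤ C(1+|n|)^q for all n ∈ ℤ. Let Λ = (Λ_1,…,Λ_m) be a tuple of vectors in H satisfying U Λ_i = Σ_{k=1}^m A_{ik} Λ_k for each i. Suppose that for all i, k, (1+|j|)^q ⟨U^j Λ_k, Λ_i⟩ → 0 as j → ∞. Then Λ_i = 0 for every i. -/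
open Filter

attribute [local instance] Matrix.normedAddCommGroup

/-- Let `H` be a complex Hilbert space, `U` a unitary operator on `H`,
`m ≥ 1`, and `A` an invertible `m × m` complex matrix whose powers grow at most polynomially:
`‖Aⁿ‖ ≤ C (1 + |n|)^q` for all `n : ℤ`.  Let `Λ = (Λ_1, …, Λ_m)` be vectors of `H` with
`U Λ_i = Σ_k A_{ik} Λ_k` for each `i`.  If `(1 + |j|)^q ⟨U^j Λ_k, Λ_i⟩ → 0` as `j → ∞` for
all `i, k`, then every `Λ_i = 0`. -/
theorem twisted_eigenvectors_of_decaying_coefficients_eq_zero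
    {H : Type*} [NormedAddCommGroup H] [InnerProductSpace ℂ H] [CompleteSpace H]
    (U : H ≃ₗᵢ[ℂ] H) (m : ℕ) (hm : 1 ≤ m)
    (A : Matrix (Fin m) (Fin m) ℂ) (hA : IsUnit A.det)
    (C : ℝ) (hC : 0 < C) (q : ℕ)
    (hgrow : ∀ n : ℤ, ‖A ^ n‖ ≤ C * (1 + (|n| : ℝ)) ^ q)
    (Λ : Fin m → H)
    (heq : ∀ i, U (Λ i) = ∑ k, A i k • Λ k)
    (hdecay : ∀ i k, Tendsto
      (fun j : ℕ => ((1 + (j : ℝ)) ^ q : ℂ) * (inner ℂ ((U ^ j) (Λ k)) (Λ i) : ℂ))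
      atTop (nhds 0)) :
    ∀ i, Λ i = 0 := by
  -- Step 1: iterate the twisted eigenvector equation
  have hpow : ∀ (n : ℕ) (i : Fin m), (U ^ n) (Λ i) = ∑ k, (A ^ n) i k • Λ k := by
    intro n
    induction n with
    | zero => intro i; simp [Matrix.one_apply, ite_smul]
    | succ n ih =>
      intro i
      have h1 : (U ^ (n + 1)) (Λ i) = U ((U ^ n) (Λ i)) := by
        rw [pow_succ']; rfl
      rw [h1, ih i, map_sum]
      simp only [map_smul, heq, Finset.smul_sum, smul_smul]
      rw [Finset.sum_comm]
      refine Finset.sum_congr rfl fun l _ => ?_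
      rw [← Finset.sum_smul, pow_succ, Matrix.mul_apply]
  -- Step 2: express inner products via A^n
  have hinner : ∀ (n : ℕ) (i k : Fin m),
      (inner ℂ ((U ^ n) (Λ k)) (Λ i) : ℂ)
        = ∑ l, (starRingEnd ℂ) ((A ^ n) k l) * inner ℂ (Λ l) (Λ i) := by
    intro n i k
    rw [hpow n k, sum_inner]
    simp [inner_smul_left]
  -- Step 3: recover the Gram matrix from A^{-n} times the inner products
  have hrec : ∀ (n : ℕ) (i l : Fin m),
      (inner ℂ (Λ l) (Λ i) : ℂ)
        = ∑ k, (starRingEnd ℂ) ((A ^ (-(n : ℤ))) l k) * inner ℂ ((U ^ n) (Λ k)) (Λ i) := by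
    intro n i l
    have hmul : A ^ (-(n : ℤ)) * A ^ (n : ℤ) = 1 := by
      rw [← Matrix.zpow_add hA, neg_add_cancel, zpow_zero]
    calc (inner ℂ (Λ l) (Λ i) : ℂ)
        = ∑ p, (starRingEnd ℂ) ((1 : Matrix (Fin m) (Fin m) ℂ) l p) * inner ℂ (Λ p) (Λ i) := by
          simp [Matrix.one_apply, apply_ite]
      _ = ∑ p, (starRingEnd ℂ) ((A ^ (-(n : ℤ)) * A ^ (n : ℤ)) l p) * inner ℂ (Λ p) (Λ i) := by
          rw [hmul]
      _ = ∑ k, (starRingEnd ℂ) ((A ^ (-(n : ℤ))) l k) * inner ℂ ((U ^ n) (Λ k)) (Λ i) := by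
          simp only [hinner, Matrix.mul_apply, map_sum, Finset.sum_mul, Finset.mul_sum,
            map_mul, zpow_natCast]
          rw [Finset.sum_comm]
          simp [mul_assoc]
  -- Step 4: bound and take the limit
  have hGram : ∀ i l : Fin m, (inner ℂ (Λ l) (Λ i) : ℂ) = 0 := by
    intro i l
    have hbound : ∀ n : ℕ, ‖(inner ℂ (Λ l) (Λ i) : ℂ)‖
        ≤ C * ∑ k, (1 + (n : ℝ)) ^ q * ‖(inner ℂ ((U ^ n) (Λ k)) (Λ i) : ℂ)‖ := by
      intro n
      rw [hrec n i l, Finset.mul_sum]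
      refine (norm_sum_le _ _).trans (Finset.sum_le_sum fun k _ => ?_)
      rw [norm_mul, RCLike.norm_conj]
      have h1 : ‖(A ^ (-(n : ℤ))) l k‖ ≤ C * (1 + (n : ℝ)) ^ q := by
        refine (Matrix.norm_entry_le_entrywise_sup_norm _).trans ?_
        have := hgrow (-(n : ℤ))
        simpa using this
      have h2 : (0:ℝ) ≤ ‖(inner ℂ ((U ^ n) (Λ k)) (Λ i) : ℂ)‖ := norm_nonneg _
      calc ‖(A ^ (-(n : ℤ))) l k‖ * ‖(inner ℂ ((U ^ n) (Λ k)) (Λ i) : ℂ)‖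
          ≤ (C * (1 + (n : ℝ)) ^ q) * ‖(inner ℂ ((U ^ n) (Λ k)) (Λ i) : ℂ)‖ :=
            mul_le_mul_of_nonneg_right h1 h2
        _ = C * ((1 + (n : ℝ)) ^ q * ‖(inner ℂ ((U ^ n) (Λ k)) (Λ i) : ℂ)‖) := by ring
    have hlim : Tendsto (fun n : ℕ =>
        C * ∑ k, (1 + (n : ℝ)) ^ q * ‖(inner ℂ ((U ^ n) (Λ k)) (Λ i) : ℂ)‖)
        atTop (nhds 0) := by
      have : Tendsto (fun n : ℕ =>
          ∑ k, (1 + (n : ℝ)) ^ q * ‖(inner ℂ ((U ^ n) (Λ k)) (Λ i) : ℂ)‖) atTop (nhds 0) := by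
        have h0 : (0:ℝ) = ∑ _k : Fin m, 0 := by simp
        rw [h0]
        refine tendsto_finset_sum _ fun k _ => ?_
        have := (hdecay i k).norm
        simp only [norm_zero, norm_mul] at this
        refine this.congr fun j => ?_
        congr 1
        have hc : ((1:ℂ) + ((j:ℝ):ℂ)) = (((1 + (j:ℝ)):ℝ):ℂ) := by push_cast; ring
        rw [norm_pow, hc, Complex.norm_real, Real.norm_of_nonneg (by positivity)]
      simpa using this.const_mul C
    have : ‖(inner ℂ (Λ l) (Λ i) : ℂ)‖ ≤ 0 := ge_of_tendsto' hlim hbound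
    simpa using le_antisymm this (norm_nonneg _)
  intro i
  have := hGram i i
  rwa [inner_self_eq_zero] at this
end
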